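/- arXiv:1808.10213 — 2 statements merged into one kernel-verified Lean document; each statement's English description precedes it below -/
import Mathlib

section
/- For the deterministic flow φ_t on E = ℝ × [0,1], the map (t, x, y) ↦ φ_t(x, y) is jointly continuous on [0,∞) × E, where φ_t(x,y) = (x, h(t,x,y)) for t ≤ τ(x,y) and φ_t(x,y) = (x e^{τ(x,y)−t}, 0) for t ≥ τ(x,y). -/
noncomputable section

/-- `Γ = {−3,−1,1,3}`. -/
def Gam : Set ℝ := {-3, -1, 1, 3}

/-- `c(x) = 1 + min(dist(x,Γ), 1)`. -/
noncomputable def c (x : ℝ) : ℝ := 1 + min (Metric.infDist x Gam) 1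

/-- The explicit solution `h(t,x,y) = (y − c(x)) eᵗ + c(x)`. -/
noncomputable def hh (t x y : ℝ) : ℝ := (y - c x) * Real.exp t + c x

/-- Hitting time of 0. -/
noncomputable def tau (x y : ℝ) : ℝ := sInf {s : ℝ | 0 ≤ s ∧ hh s x y = 0}

/-- The deterministic flow on `E = ℝ × [0,1]`: for `t ≤ τ(x,y)` (equivalently,
while `h(t,x,y) ≥ 0`, since `h(·,x,y)` is nonincreasing for `y ∈ [0,1]`) it is
`(x, h(t,x,y))`, and for `t ≥ τ(x,y)` it is `(x e^{τ(x,y)−t}, 0)`. -/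
noncomputable def phi (t : ℝ) (p : ℝ × ℝ) : ℝ × ℝ :=
  if 0 ≤ hh t p.1 p.2 then (p.1, hh t p.1 p.2)
  else (p.1 * Real.exp (tau p.1 p.2 - t), 0)

/-- The candidate attractor `A_γ = ([−γ,γ] × {0}) ∪ ({−γ} × [0,1]) ∪ ({γ} × [0,1])`. -/
def Ag (γ : ℝ) : Set (ℝ × ℝ) :=
  (Set.Icc (-γ) γ ×ˢ {0}) ∪ ({-γ} ×ˢ Set.Icc (0:ℝ) 1) ∪ ({γ} ×ˢ Set.Icc (0:ℝ) 1)

lemma c_pos (x : ℝ) : 0 < c x := by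
  have h1 : (0:ℝ) ≤ min (Metric.infDist x Gam) 1 :=
    le_min Metric.infDist_nonneg zero_le_one
  unfold c; linarith

lemma c_cont : Continuous c :=
  continuous_const.add ((Metric.continuous_infDist_pt Gam).min continuous_const)

lemma hh_cont : Continuous (fun q : ℝ × (ℝ × ℝ) => hh q.1 q.2.1 q.2.2) := by
  unfold hh
  have hc : Continuous (fun q : ℝ × (ℝ × ℝ) => c q.2.1) :=
    c_cont.comp (continuous_fst.comp continuous_snd)
  exact (((continuous_snd.comp continuous_snd).sub hc).mul
    (Real.continuous_exp.comp continuous_fst)).add hc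

lemma lt_c_of_hh_nonpos {t x y : ℝ} (h : hh t x y ≤ 0) : y < c x := by
  by_contra h'
  push_neg at h'
  unfold hh at h
  nlinarith [Real.exp_pos t, c_pos x]

lemma hh_zero_iff {t x y : ℝ} (hy : y < c x) :
    hh t x y = 0 ↔ t = Real.log (c x / (c x - y)) := by
  have hcy : 0 < c x - y := by linarith
  have hc := c_pos x
  constructor
  · intro h
    unfold hh at h
    have he : Real.exp t = c x / (c x - y) := by
      rw [eq_div_iff (by linarith)]
      linarith [mul_comm (Real.exp t) (c x - y), (by linear_combination h :
        (y - c x) * Real.exp t = -(c x))]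
    rw [← he, Real.log_exp]
  · intro h
    subst h
    unfold hh
    rw [Real.exp_log (by positivity)]
    field_simp; ring

lemma tau_eq {x y : ℝ} (hy0 : 0 ≤ y) (hy : y < c x) :
    tau x y = Real.log (c x / (c x - y)) := by
  have hcy : 0 < c x - y := by linarith
  have hlog : 0 ≤ Real.log (c x / (c x - y)) :=
    Real.log_nonneg ((le_div_iff₀ hcy).mpr (by linarith))
  unfold tau
  have hset : {s : ℝ | 0 ≤ s ∧ hh s x y = 0} = {Real.log (c x / (c x - y))} := by
    ext s
    simp only [Set.mem_setOf_eq, Set.mem_singleton_iff]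
    constructor
    · rintro ⟨-, h⟩; exact (hh_zero_iff hy).mp h
    · rintro rfl; exact ⟨hlog, (hh_zero_iff hy).mpr rfl⟩
  rw [hset, csInf_singleton]

/-- the map `(t,x,y) ↦ φ_t(x,y)` is jointly continuous on
`[0,∞) × E` with `E = ℝ × [0,1]` (Euclidean topology), including at the fixed
points `(γ,1)`, `γ ∈ Γ`, where `τ = ∞`. -/
theorem flow_jointly_continuous :
    ContinuousOn (fun q : ℝ × (ℝ × ℝ) => phi q.1 q.2)
      {q : ℝ × (ℝ × ℝ) | 0 ≤ q.1 ∧ q.2.2 ∈ Set.Icc (0:ℝ) 1} := by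

  have Hcont : Continuous (fun q : ℝ × (ℝ × ℝ) => hh q.1 q.2.1 q.2.2) := hh_cont
  show ContinuousOn (fun q : ℝ × (ℝ × ℝ) =>
      if 0 ≤ hh q.1 q.2.1 q.2.2 then (q.2.1, hh q.1 q.2.1 q.2.2)
      else (q.2.1 * Real.exp (tau q.2.1 q.2.2 - q.1), 0)) _
  apply ContinuousOn.if
  · rintro q ⟨hqS, hqf⟩
    have h0 : hh q.1 q.2.1 q.2.2 = 0 := by
      have hsub : frontier {a : ℝ × (ℝ × ℝ) | 0 ≤ hh a.1 a.2.1 a.2.2} ⊆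
          (fun a : ℝ × (ℝ × ℝ) => hh a.1 a.2.1 a.2.2) ⁻¹' frontier (Set.Ici 0) :=
        Hcont.frontier_preimage_subset (Set.Ici 0)
      have := hsub hqf
      simpa [frontier_Ici] using this
    have hy0 : 0 ≤ q.2.2 := hqS.2.1
    have hy : q.2.2 < c q.2.1 := lt_c_of_hh_nonpos h0.le
    have ht : q.1 = Real.log (c q.2.1 / (c q.2.1 - q.2.2)) := (hh_zero_iff hy).mp h0
    have htau : tau q.2.1 q.2.2 - q.1 = 0 := by rw [tau_eq hy0 hy, ht]; ring
    simp [h0, htau]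
  · exact ((continuous_fst.comp continuous_snd).prodMk Hcont).continuousOn
  · set V : Set (ℝ × (ℝ × ℝ)) := {q | 0 ≤ q.2.2 ∧ q.2.2 < c q.2.1} with hV
    have hsub : {q : ℝ × (ℝ × ℝ) | 0 ≤ q.1 ∧ q.2.2 ∈ Set.Icc (0:ℝ) 1} ∩
        closure {a : ℝ × (ℝ × ℝ) | ¬ 0 ≤ hh a.1 a.2.1 a.2.2} ⊆ V := by
      rintro q ⟨hqS, hqc⟩
      have hle : hh q.1 q.2.1 q.2.2 ≤ 0 := by
        have hcl : closure {a : ℝ × (ℝ × ℝ) | ¬ 0 ≤ hh a.1 a.2.1 a.2.2} ⊆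
            {a : ℝ × (ℝ × ℝ) | hh a.1 a.2.1 a.2.2 ≤ 0} := by
          apply closure_minimal
          · intro a ha; exact le_of_not_ge ha
          · exact isClosed_Iic.preimage Hcont
        exact hcl hqc
      exact ⟨hqS.2.1, lt_c_of_hh_nonpos hle⟩
    apply ContinuousOn.mono _ hsub
    have hcV : ∀ q ∈ V, c q.2.1 - q.2.2 ≠ 0 := by
      rintro q ⟨_, h2⟩; intro h; rw [sub_eq_zero] at h; exact absurd h.symm (ne_of_lt h2)
    have hcc : Continuous (fun q : ℝ × (ℝ × ℝ) => c q.2.1) :=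
      c_cont.comp (continuous_fst.comp continuous_snd)
    have hdiv : ContinuousOn
        (fun q : ℝ × (ℝ × ℝ) => c q.2.1 / (c q.2.1 - q.2.2)) V :=
      ContinuousOn.div hcc.continuousOn
        ((hcc.sub (continuous_snd.comp continuous_snd)).continuousOn) hcV
    have hdivne : ∀ q ∈ V, c q.2.1 / (c q.2.1 - q.2.2) ≠ 0 := by
      rintro q ⟨h1, h2⟩
      have : 0 < c q.2.1 / (c q.2.1 - q.2.2) := by
        apply div_pos (c_pos _); linarith
      exact ne_of_gt this
    have hG : ContinuousOn (fun q : ℝ × (ℝ × ℝ) =>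
        (q.2.1 * Real.exp (Real.log (c q.2.1 / (c q.2.1 - q.2.2)) - q.1),
          (0:ℝ))) V := by
      apply ContinuousOn.prodMk _ continuousOn_const
      apply ContinuousOn.mul (continuous_fst.comp continuous_snd).continuousOn
      exact Real.continuous_exp.comp_continuousOn
        ((hdiv.log hdivne).sub continuous_fst.continuousOn)
    apply hG.congr
    rintro q ⟨h1, h2⟩
    simp only [tau_eq h1 h2]
end
end

section
/- In the deterministic flow φ on E = ℝ × [0,1], no compact strictly invariant set contained in ℝ × {0} can attract all points of E in the metric ρ((x,y),(x̃,ỹ)) = |ỹ−y| + |H(x̃)−H(x)| if the singleton {(0,0)} fails to attract some point; combined with the fact that {(0,0)} is the unique compact strictly invariant subset of ℝ × {0}, any two ρ-attractors A₁ and A₃ as above whose intersection lies in ℝ × {0} admit no common attractor contained in both, i.e. there is no smallest attractor. Formally: if A ⊆ A₁ ∩ A₃ = [−1,1] × {0} is compact, strictly invariant under φ, then A = {(0,0)}. -/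
noncomputable section

lemma tau_x0 (x : ℝ) : tau x 0 = 0 := by
  have hset : {s : ℝ | 0 ≤ s ∧ hh s x 0 = 0} = {0} := by
    ext s
    simp only [Set.mem_setOf_eq, Set.mem_singleton_iff, hh]
    constructor
    · rintro ⟨hs, h⟩
      have hc := c_pos x
      have he : c x * Real.exp s = c x * 1 := by ring_nf; nlinarith [h]
      have : Real.exp s = Real.exp 0 := by
        rw [Real.exp_zero]; exact mul_left_cancel₀ (ne_of_gt hc) he
      exact Real.exp_injective this
    · rintro rfl
      refine ⟨le_refl 0, by simp⟩
  unfold tau; rw [hset, csInf_singleton]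

lemma phi_x0 (x t : ℝ) (ht : 0 ≤ t) : phi t (x, 0) = (x * Real.exp (-t), 0) := by
  have hc := c_pos x
  have hh_eq : hh t x 0 = c x * (1 - Real.exp t) := by unfold hh; ring
  rcases eq_or_lt_of_le ht with rfl | htpos
  · have h0 : hh (0:ℝ) x 0 = 0 := by rw [hh_eq, Real.exp_zero]; ring
    simp [phi, h0, Real.exp_zero]
  · have hexp : 1 < Real.exp t := by
      calc (1:ℝ) = Real.exp 0 := Real.exp_zero.symm
      _ < Real.exp t := Real.exp_lt_exp.mpr htpos
    have hneg : hh t x 0 < 0 := by rw [hh_eq]; nlinarith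
    have : ¬ 0 ≤ hh t ((x, (0:ℝ)).1) ((x, (0:ℝ)).2) := by simpa using not_le.mpr hneg
    simp only [phi, this, if_false]
    rw [tau_x0]
    norm_num

/-- any nonempty compact set `A ⊆ A₁ ∩ A₃` (`= [−1,1] × {0}`) that
is strictly invariant under the flow (`φ_t(A) = A` for all `t ≥ 0`) must equal
`{(0,0)}`; hence there is no smaller common attractor inside `A₁` and `A₃`. -/
theorem no_smaller_invariant_set (A : Set (ℝ × ℝ))
    (hsub : A ⊆ Ag 1 ∩ Ag 3) (hne : A.Nonempty) (hA : IsCompact A)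
    (hinv : ∀ t : ℝ, 0 ≤ t → phi t '' A = A) :
    A = {((0:ℝ), (0:ℝ))} := by
  have hy : ∀ p ∈ A, p.2 = 0 := by
    intro p hp
    obtain ⟨h1, h3⟩ := hsub hp
    rcases h1 with (h | h) | h
    · exact h.2
    · -- p.1 = -1
      have hx : p.1 = -1 := h.1
      rcases h3 with (h' | h') | h'
      · exact h'.2
      · exact absurd (hx ▸ h'.1) (by norm_num)
      · exact absurd (hx ▸ h'.1) (by norm_num)
    · have hx : p.1 = 1 := h.1
      rcases h3 with (h' | h') | h'
      · exact h'.2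
      · exact absurd (hx ▸ h'.1) (by norm_num)
      · exact absurd (hx ▸ h'.1) (by norm_num)
  obtain ⟨p₀, hp₀, hmax⟩ := hA.exists_isMaxOn hne
    ((continuous_abs.comp continuous_fst).continuousOn)
  have key : |p₀.1| = 0 := by
    by_contra hM
    have hMpos : 0 < |p₀.1| := lt_of_le_of_ne (abs_nonneg _) (Ne.symm hM)
    have h1 := hinv 1 zero_le_one
    have : p₀ ∈ phi 1 '' A := h1.symm ▸ hp₀
    obtain ⟨q, hq, hq'⟩ := this
    have hq2 : q.2 = 0 := hy q hq
    have hqe : q = (q.1, (0:ℝ)) := by rw [← hq2]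
    have : phi 1 q = (q.1 * Real.exp (-1), 0) := by rw [hqe]; exact phi_x0 q.1 1 zero_le_one
    have hp1 : p₀.1 = q.1 * Real.exp (-1) := by rw [← hq', this]
    have hle : |q.1| ≤ |p₀.1| := hmax hq
    have hexp : Real.exp (-1) < 1 := by
      calc Real.exp (-1) < Real.exp 0 := Real.exp_lt_exp.mpr (by norm_num)
      _ = 1 := Real.exp_zero
    have hexpos : 0 < Real.exp (-1) := Real.exp_pos _
    have : |p₀.1| = |q.1| * Real.exp (-1) := by
      rw [hp1, abs_mul, abs_of_pos hexpos]
    nlinarith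
  have hall : ∀ p ∈ A, p = ((0:ℝ), (0:ℝ)) := by
    intro p hp
    have h1 : |p.1| ≤ 0 := key ▸ hmax hp
    have : p.1 = 0 := abs_nonpos_iff.mp h1
    have h2 := hy p hp
    exact Prod.ext this h2
  apply Set.eq_singleton_iff_unique_mem.mpr
  refine ⟨?_, hall⟩
  obtain ⟨p, hp⟩ := hne
  have := hall p hp
  rwa [this] at hp
end
end
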